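/- If additionally f is strongly convex with parameter σ₁ ∈ (0,1] with respect to ‖·‖₁, the PCDM algorithm converges linearly: f(u_k) − f* ≤ (1 − 2σ₁/(M(1+σ₁)))^k · ((1/2)r₀² + f(u₀) − f*). -/

import Mathlib

open scoped RealInnerProductSpace

noncomputable abbrev FullSpace (M : ℕ) (n : Fin M → ℕ) :=
  PiLp 2 (fun i : Fin M => EuclideanSpace ℝ (Fin (n i)))

noncomputable def blockEmb {M : ℕ} {n : Fin M → ℕ} (i : Fin M)
    (h : EuclideanSpace ℝ (Fin (n i))) : FullSpace M n :=
  (WithLp.equiv 2 _).symm (Pi.single i h)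

noncomputable def norm1Sq {M : ℕ} {n : Fin M → ℕ} (L : Fin M → ℝ)
    (u : FullSpace M n) : ℝ := ∑ i, L i * ‖u i‖ ^ 2

/-! ### Auxiliary lemmas -/

lemma blockEmb_apply_ne {M : ℕ} {n : Fin M → ℕ} (i : Fin M)
    (h : EuclideanSpace ℝ (Fin (n i))) {j : Fin M} (hj : j ≠ i) :
    blockEmb i h j = 0 := by
  rw [blockEmb, WithLp.equiv_symm_apply, PiLp.toLp_apply, Pi.single_eq_of_ne hj]

lemma blockEmb_apply_self {M : ℕ} {n : Fin M → ℕ} (i : Fin M)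
    (h : EuclideanSpace ℝ (Fin (n i))) :
    blockEmb i h i = h := by
  rw [blockEmb, WithLp.equiv_symm_apply, PiLp.toLp_apply, Pi.single_eq_same]

lemma inner_blockEmb {M : ℕ} {n : Fin M → ℕ} (w : FullSpace M n) (i : Fin M)
    (h : EuclideanSpace ℝ (Fin (n i))) :
    ⟪w, blockEmb i h⟫ = ⟪w i, h⟫ := by
  rw [PiLp.inner_apply]
  rw [Fintype.sum_eq_single i (fun j hj => by
    rw [blockEmb_apply_ne i h hj, inner_zero_right])]
  rw [blockEmb_apply_self]

lemma blockEmb_smul {M : ℕ} {n : Fin M → ℕ} (i : Fin M) (t : ℝ)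
    (h : EuclideanSpace ℝ (Fin (n i))) :
    blockEmb i (t • h) = t • blockEmb i h := by
  rw [blockEmb, blockEmb, Pi.single_smul, WithLp.equiv_symm_apply, WithLp.toLp_smul]

lemma sum_apply' {M : ℕ} {n : Fin M → ℕ} {γ : Type*} (s : Finset γ)
    (g : γ → FullSpace M n) (j : Fin M) :
    (∑ c ∈ s, g c) j = ∑ c ∈ s, g c j := by
  induction s using Finset.cons_induction with
  | empty => simp [PiLp.zero_apply]
  | cons a s ha ih => rw [Finset.sum_cons, Finset.sum_cons, PiLp.add_apply, ih]

lemma sum_blockEmb {M : ℕ} {n : Fin M → ℕ}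
    (h : (i : Fin M) → EuclideanSpace ℝ (Fin (n i))) (j : Fin M) :
    ∑ i, blockEmb i (h i) j = h j := by
  rw [Fintype.sum_eq_single j (fun i hi => blockEmb_apply_ne i (h i) (Ne.symm hi))]
  exact blockEmb_apply_self j (h j)

lemma hasDerivAt_line {F : Type*} [NormedAddCommGroup F] [InnerProductSpace ℝ F]
    [CompleteSpace F] (f : F → ℝ) (hf : Differentiable ℝ f) (c v : F) (t : ℝ) :
    HasDerivAt (fun s : ℝ => f (c + s • v)) ⟪gradient f (c + t • v), v⟫ t := by
  have h1 : HasDerivAt (fun s : ℝ => c + s • v) v t := by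
    simpa using ((hasDerivAt_id t).smul_const v).const_add c
  have h2 : HasFDerivAt f ((InnerProductSpace.toDual ℝ F) (gradient f (c + t • v)))
      (c + t • v) :=
    hasGradientAt_iff_hasFDerivAt.mp ((hf (c + t • v)).hasGradientAt)
  have := h2.comp_hasDerivAt t h1
  simpa [Function.comp_def, InnerProductSpace.toDual_apply_apply] using this

lemma block_descent {M : ℕ} {n : Fin M → ℕ} (f : FullSpace M n → ℝ)
    (hf : Differentiable ℝ f) (L : Fin M → ℝ) (i : Fin M)
    (hLip : ∀ (u : FullSpace M n) (h : EuclideanSpace ℝ (Fin (n i))),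
      ‖gradient f (u + blockEmb i h) i - gradient f u i‖ ≤ L i * ‖h‖)
    (u : FullSpace M n) (h : EuclideanSpace ℝ (Fin (n i))) :
    f (u + blockEmb i h) ≤ f u + ⟪gradient f u i, h⟫ + L i / 2 * ‖h‖ ^ 2 := by
  set v : FullSpace M n := blockEmb i h with hv
  set c1 : ℝ := ⟪gradient f u i, h⟫ with hc1
  set c2 : ℝ := L i / 2 * ‖h‖ ^ 2 with hc2
  set φ : ℝ → ℝ := fun t => f (u + t • v) - t * c1 - t ^ 2 * c2 with hφ
  have hd : ∀ t : ℝ, HasDerivAt φ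
      (⟪gradient f (u + t • v) i, h⟫ - c1 - 2 * t * c2) t := by
    intro t
    have h1 := hasDerivAt_line f hf u v t
    have h2 : HasDerivAt (fun s : ℝ => s * c1) c1 t := by
      simpa using (hasDerivAt_id t).mul_const c1
    have h3 : HasDerivAt (fun s : ℝ => s ^ 2 * c2) (2 * t * c2) t := by
      simpa [mul_comm] using (hasDerivAt_pow 2 t).mul_const c2
    have h4 := (h1.sub h2).sub h3
    have e : ⟪gradient f (u + t • v), v⟫ = ⟪gradient f (u + t • v) i, h⟫ :=
      inner_blockEmb _ i h
    simpa [hφ, e, Pi.sub_def] using h4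
  have hderiv_nonpos : ∀ t ∈ interior (Set.Icc (0:ℝ) 1), deriv φ t ≤ 0 := by
    intro t ht
    rw [interior_Icc] at ht
    rw [(hd t).deriv]
    have e1 : u + t • v = u + blockEmb i (t • h) := by rw [blockEmb_smul]
    have e2 : ⟪gradient f (u + t • v) i, h⟫ - c1
        = ⟪gradient f (u + t • v) i - gradient f u i, h⟫ := by
      rw [inner_sub_left, hc1]
    have e3 : ⟪gradient f (u + t • v) i - gradient f u i, h⟫
        ≤ ‖gradient f (u + t • v) i - gradient f u i‖ * ‖h‖ :=
      real_inner_le_norm _ _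
    have e4 : ‖gradient f (u + t • v) i - gradient f u i‖ ≤ L i * ‖t • h‖ := by
      rw [e1]; exact hLip u (t • h)
    have e5 : ‖t • h‖ = t * ‖h‖ := by
      rw [norm_smul, Real.norm_eq_abs, abs_of_pos ht.1]
    have hh : (0:ℝ) ≤ ‖h‖ := norm_nonneg _
    have e6 : ‖gradient f (u + t • v) i - gradient f u i‖ * ‖h‖
        ≤ L i * (t * ‖h‖) * ‖h‖ := by
      rw [← e5]; exact mul_le_mul_of_nonneg_right e4 hh
    have e7 : L i * (t * ‖h‖) * ‖h‖ = 2 * t * c2 := by rw [hc2]; ring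
    rw [e2]
    linarith [e3.trans e6]
  have hcont : ContinuousOn φ (Set.Icc (0:ℝ) 1) :=
    fun t _ => (hd t).continuousAt.continuousWithinAt
  have hdiff : DifferentiableOn ℝ φ (interior (Set.Icc (0:ℝ) 1)) :=
    fun t _ => ((hd t).differentiableAt).differentiableWithinAt
  have hanti := antitoneOn_of_deriv_nonpos (convex_Icc 0 1) hcont hdiff hderiv_nonpos
  have h01 := hanti (Set.mem_Icc.mpr ⟨le_refl 0, zero_le_one⟩)
    (Set.mem_Icc.mpr ⟨zero_le_one, le_refl 1⟩) zero_le_one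
  simp only [hφ, one_smul, zero_smul, add_zero, one_pow, one_mul, zero_pow,
    zero_mul, sub_zero, mul_zero] at h01
  linarith

lemma vi_aux {F : Type*} [NormedAddCommGroup F] [InnerProductSpace ℝ F]
    {U : Set F} (hU : Convex ℝ U) (g x wb : F) (Lc : ℝ)
    (hmin : ∀ v ∈ U, ⟪g, wb - x⟫ + Lc / 2 * ‖wb - x‖ ^ 2 ≤
      ⟪g, v - x⟫ + Lc / 2 * ‖v - x‖ ^ 2)
    (hwb : wb ∈ U) {v : F} (hv : v ∈ U) :
    0 ≤ ⟪g, v - wb⟫ + Lc * ⟪wb - x, v - wb⟫ := by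
  set X : ℝ := ⟪g, v - wb⟫ + Lc * ⟪wb - x, v - wb⟫ with hX
  set c : ℝ := Lc / 2 * ‖v - wb‖ ^ 2 with hc
  have key : ∀ t : ℝ, t ∈ Set.Ioc (0:ℝ) 1 → 0 ≤ X + t * c := by
    intro t ht
    have hvt : wb + t • (v - wb) ∈ U :=
      hU.add_smul_sub_mem hwb hv ⟨ht.1.le, ht.2⟩
    have h1 := hmin _ hvt
    have e0 : wb + t • (v - wb) - x = (wb - x) + t • (v - wb) := by abel
    have e1 : ⟪g, wb + t • (v - wb) - x⟫ = ⟪g, wb - x⟫ + t * ⟪g, v - wb⟫ := by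
      rw [e0, inner_add_right, real_inner_smul_right]
    have e2 : ‖wb + t • (v - wb) - x‖ ^ 2
        = ‖wb - x‖ ^ 2 + 2 * (t * ⟪wb - x, v - wb⟫) + t ^ 2 * ‖v - wb‖ ^ 2 := by
      rw [e0, norm_add_sq_real, real_inner_smul_right, norm_smul,
        Real.norm_eq_abs, mul_pow, sq_abs]
    rw [e1, e2] at h1
    have h2 : 0 ≤ t * (X + t * c) := by rw [hX, hc]; nlinarith [h1]
    exact nonneg_of_mul_nonneg_right (by linarith [h2]) ht.1
  by_contra hneg
  push_neg at hneg
  rcases le_or_gt c 0 with hcle | hcpos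
  · have := key 1 ⟨zero_lt_one, le_refl 1⟩
    linarith
  · set t0 : ℝ := min 1 (-X / (2 * c)) with ht0
    have ht0pos : 0 < t0 := lt_min zero_lt_one (div_pos (by linarith) (by linarith))
    have ht0le : t0 ≤ 1 := min_le_left _ _
    have ht0le2 : t0 ≤ -X / (2 * c) := min_le_right _ _
    have h1 := key t0 ⟨ht0pos, ht0le⟩
    have h2 : t0 * c ≤ (-X / (2 * c)) * c := mul_le_mul_of_nonneg_right ht0le2 hcpos.le
    have h3 : (-X / (2 * c)) * c = -X / 2 := by field_simp
    linarith

lemma grad_min_nonneg {F : Type*} [NormedAddCommGroup F] [InnerProductSpace ℝ F]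
    [CompleteSpace F] (f : F → ℝ) (hf : Differentiable ℝ f) (x0 y : F)
    (hmin : ∀ t : ℝ, t ∈ Set.Icc (0:ℝ) 1 → f x0 ≤ f (x0 + t • (y - x0))) :
    0 ≤ ⟪gradient f x0, y - x0⟫ := by
  have hD : HasDerivAt (fun s : ℝ => f (x0 + s • (y - x0)))
      ⟪gradient f x0, y - x0⟫ 0 := by
    have := hasDerivAt_line f hf x0 (y - x0) 0
    simpa using this
  rw [hasDerivAt_iff_tendsto_slope] at hD
  have h2 : Filter.Tendsto (slope (fun s : ℝ => f (x0 + s • (y - x0))) 0)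
      (nhdsWithin (0:ℝ) (Set.Ioi 0)) (nhds ⟪gradient f x0, y - x0⟫) :=
    hD.mono_left (nhdsWithin_mono _ (fun t ht => ne_of_gt ht))
  refine ge_of_tendsto h2 ?_
  refine Filter.eventually_of_mem
    (Ioc_mem_nhdsGT_of_mem (⟨le_refl (0:ℝ), zero_lt_one⟩ : (0:ℝ) ∈ Set.Ico 0 1)) ?_
  intro t ht
  have h3 := hmin t ⟨ht.1.le, ht.2⟩
  have h4 : slope (fun s : ℝ => f (x0 + s • (y - x0))) 0 t
      = (f (x0 + t • (y - x0)) - f x0) / t := by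
    simp [slope_def_field]
  rw [h4]
  apply div_nonneg (by simpa using h3) ht.1.le

set_option maxHeartbeats 2000000 in
/-- Theorem 2: linear convergence rate of PCDM under strong convexity. -/
theorem pcdm_linear_rate {M : ℕ} {n : Fin M → ℕ} (hM : 0 < M)
    (f : FullSpace M n → ℝ) (hconv : ConvexOn ℝ Set.univ f) (hf : Differentiable ℝ f)
    (L : Fin M → ℝ) (hL : ∀ i, 0 < L i)
    (hLip : ∀ (i : Fin M) (u : FullSpace M n) (h : EuclideanSpace ℝ (Fin (n i))),
      ‖gradient f (u + blockEmb i h) i - gradient f u i‖ ≤ L i * ‖h‖)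
    (σ₁ : ℝ) (hσ₁ : 0 < σ₁ ∧ σ₁ ≤ 1)
    (hsc : ∀ w v : FullSpace M n,
      f w ≥ f v + ⟪gradient f v, w - v⟫ + σ₁ / 2 * norm1Sq L (w - v))
    (U : (i : Fin M) → Set (EuclideanSpace ℝ (Fin (n i))))
    (hUclosed : ∀ i, IsClosed (U i)) (hUconvex : ∀ i, Convex ℝ (U i))
    (ustar : FullSpace M n) (hstarU : ∀ i, ustar i ∈ U i)
    (hstarmin : ∀ w : FullSpace M n, (∀ i, w i ∈ U i) → f ustar ≤ f w)
    (u : ℕ → FullSpace M n) (h0 : ∀ i, u 0 i ∈ U i)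
    (vbar : ℕ → (i : Fin M) → EuclideanSpace ℝ (Fin (n i)))
    (hvbarU : ∀ k i, vbar k i ∈ U i)
    (hmin : ∀ k i, ∀ v ∈ U i,
      ⟪gradient f (u k) i, vbar k i - u k i⟫ + L i / 2 * ‖vbar k i - u k i‖ ^ 2 ≤
        ⟪gradient f (u k) i, v - u k i⟫ + L i / 2 * ‖v - u k i‖ ^ 2)
    (hupd : ∀ k i,
      u (k + 1) i = (1 / (M : ℝ)) • vbar k i + (((M : ℝ) - 1) / (M : ℝ)) • u k i) :
    ∀ k : ℕ, f (u k) - f ustar ≤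
      (1 - 2 * σ₁ / ((M : ℝ) * (1 + σ₁))) ^ k *
        (1 / 2 * norm1Sq L (u 0 - ustar) + f (u 0) - f ustar) := by
  obtain ⟨hσpos, hσle⟩ := hσ₁
  have hM1 : (1:ℝ) ≤ (M:ℝ) := by exact_mod_cast hM
  have hMpos : (0:ℝ) < (M:ℝ) := lt_of_lt_of_le zero_lt_one hM1
  have hMne : (M:ℝ) ≠ 0 := ne_of_gt hMpos
  -- feasibility of the iterates
  have feas : ∀ k i, u k i ∈ U i := by
    intro k
    induction k with
    | zero => exact h0
    | succ k ih =>
      intro i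
      rw [hupd k i]
      exact hUconvex i (hvbarU k i) (ih i)
        (by positivity)
        (div_nonneg (by linarith) hMpos.le)
        (by field_simp; ring)
  have fstar_le : ∀ k, f ustar ≤ f (u k) := fun k => hstarmin _ (feas k)
  -- blockwise form of the update
  have hupd' : ∀ k i, u (k+1) i = u k i + ((M:ℝ)⁻¹) • (vbar k i - u k i) := by
    intro k i
    have h1 : ((M:ℝ)-1)/(M:ℝ) = 1 - (M:ℝ)⁻¹ := by field_simp
    rw [hupd k i, h1, one_div, sub_smul, one_smul, smul_sub]
    abel
  have nn : ∀ y : FullSpace M n, 0 ≤ norm1Sq L y :=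
    fun y => Finset.sum_nonneg (fun i _ => mul_nonneg (hL i).le (sq_nonneg _))
  set Sk : ℕ → ℝ := fun k => norm1Sq L (u k - ustar) with hSk
  set Φ : ℕ → ℝ := fun k => 1 / 2 * Sk k + f (u k) - f ustar with hΦ
  -- strong convexity lower bound: f(u k) - f* ≥ σ/2 * Sk k
  have lower : ∀ k, σ₁ / 2 * Sk k ≤ f (u k) - f ustar := by
    intro k
    have hstat : 0 ≤ ⟪gradient f ustar, u k - ustar⟫ := by
      apply grad_min_nonneg f hf ustar (u k)
      intro t ht
      apply hstarmin
      intro i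
      have e : (ustar + t • (u k - ustar)) i = ustar i + t • (u k i - ustar i) := by
        rw [PiLp.add_apply, PiLp.smul_apply, PiLp.sub_apply]
      rw [e]
      exact (hUconvex i).add_smul_sub_mem (hstarU i) (feas k i) ht
    have h1 := hsc (u k) ustar
    simp only [hSk]
    linarith [h1, hstat]
  -- the one-step contraction
  have key : ∀ k, Φ (k+1) ≤ (1 - 2 * σ₁ / ((M:ℝ) * (1 + σ₁))) * Φ k := by
    intro k
    set g : FullSpace M n := gradient f (u k) with hg
    set d : (i : Fin M) → EuclideanSpace ℝ (Fin (n i)) := fun i => vbar k i - u k i with hd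
    set e : (i : Fin M) → EuclideanSpace ℝ (Fin (n i)) := fun i => u k i - ustar i with he
    set A : ℝ := ∑ i, ⟪g i, d i⟫ with hA
    set C : ℝ := ∑ i, L i * ‖d i‖ ^ 2 with hC
    set E : ℝ := ∑ i, L i * ⟪e i, d i⟫ with hE
    set G : ℝ := ∑ i, ⟪g i, e i⟫ with hG
    have hC0 : 0 ≤ C := Finset.sum_nonneg (fun i _ => mul_nonneg (hL i).le (sq_nonneg _))
    -- the Jensen decomposition of the update
    have hsumEq : u (k+1) = ∑ i, ((M:ℝ)⁻¹) • (u k + blockEmb i (d i)) := by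
      apply PiLp.ext
      intro j
      rw [sum_apply']
      have e1 : ∀ i : Fin M, (((M:ℝ)⁻¹) • (u k + blockEmb i (d i))) j
          = (M:ℝ)⁻¹ • u k j + (M:ℝ)⁻¹ • blockEmb i (d i) j := by
        intro i
        rw [PiLp.smul_apply, PiLp.add_apply, smul_add]
      rw [Finset.sum_congr rfl (fun i _ => e1 i), Finset.sum_add_distrib,
        Finset.sum_const, Finset.card_univ, Fintype.card_fin, ← Finset.smul_sum,
        sum_blockEmb, ← Nat.cast_smul_eq_nsmul ℝ, smul_smul,
        mul_inv_cancel₀ hMne, one_smul, hupd' k j]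
    -- Jensen + block descent
    have hJ : f (u (k+1)) ≤ f (u k) + (M:ℝ)⁻¹ * (A + C / 2) := by
      have hw : ∑ _i : Fin M, ((M:ℝ)⁻¹) = 1 := by
        rw [Finset.sum_const, Finset.card_univ, Fintype.card_fin, nsmul_eq_mul,
          mul_inv_cancel₀ hMne]
      have h1 : f (u (k+1)) ≤ ∑ i, ((M:ℝ)⁻¹) * f (u k + blockEmb i (d i)) := by
        rw [hsumEq]
        have := hconv.map_sum_le (t := Finset.univ)
          (w := fun _ : Fin M => (M:ℝ)⁻¹) (p := fun i => u k + blockEmb i (d i))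
          (fun i _ => by positivity) hw (fun i _ => Set.mem_univ _)
        simpa [smul_eq_mul] using this
      have h2 : ∀ i : Fin M, ((M:ℝ)⁻¹) * f (u k + blockEmb i (d i))
          ≤ ((M:ℝ)⁻¹) * (f (u k) + (⟪g i, d i⟫ + L i / 2 * ‖d i‖ ^ 2)) := by
        intro i
        apply mul_le_mul_of_nonneg_left _ (by positivity)
        have := block_descent f hf L i (hLip i) (u k) (d i)
        linarith [this]
      have h3 := h1.trans (Finset.sum_le_sum (fun i _ => h2 i))
      have h4 : ∑ i : Fin M, ((M:ℝ)⁻¹) * (f (u k) + (⟪g i, d i⟫ + L i / 2 * ‖d i‖ ^ 2))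
          = f (u k) + (M:ℝ)⁻¹ * (A + C / 2) := by
        rw [Finset.sum_congr rfl (fun i _ => by ring :
          ∀ i ∈ Finset.univ, ((M:ℝ)⁻¹) * (f (u k) + (⟪g i, d i⟫ + L i / 2 * ‖d i‖ ^ 2))
            = (M:ℝ)⁻¹ * f (u k) + ((M:ℝ)⁻¹ * ⟪g i, d i⟫ + (M:ℝ)⁻¹ / 2 * (L i * ‖d i‖ ^ 2)))]
        rw [Finset.sum_add_distrib, Finset.sum_add_distrib, Finset.sum_const,
          Finset.card_univ, Fintype.card_fin, ← Finset.mul_sum, ← Finset.mul_sum,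
          nsmul_eq_mul, ← hA, ← hC]
        field_simp
      linarith [h3, h4.le, h4.ge]
    -- variational inequality, applied with v = ustar i, summed
    have hVI : A + C + G + E ≤ 0 := by
      have hper : ∀ i : Fin M,
          ⟪g i, d i⟫ + L i * ‖d i‖ ^ 2 + ⟪g i, e i⟫ + L i * ⟪e i, d i⟫ ≤ 0 := by
        intro i
        have h := vi_aux (hUconvex i) (g i) (u k i) (vbar k i) (L i)
          (hmin k i) (hvbarU k i) (hstarU i)
        have e0 : ustar i - vbar k i = -(e i + d i) := by
          simp only [hd, he]; abel
        have q1 : ⟪g i, ustar i - vbar k i⟫ = -(⟪g i, e i⟫ + ⟪g i, d i⟫) := by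
          rw [e0, inner_neg_right, inner_add_right]
        have q2 : ⟪vbar k i - u k i, ustar i - vbar k i⟫
            = -(⟪e i, d i⟫ + ‖d i‖ ^ 2) := by
          have h1 : vbar k i - u k i = d i := by simp only [hd]
          rw [h1, e0, inner_neg_right, inner_add_right,
            real_inner_self_eq_norm_sq, real_inner_comm (d i) (e i)]
        rw [q1, q2] at h
        nlinarith [h]
      have hsum := Finset.sum_nonpos (s := Finset.univ) (fun i _ => hper i)
      have : ∑ i : Fin M, (⟪g i, d i⟫ + L i * ‖d i‖ ^ 2 + ⟪g i, e i⟫ + L i * ⟪e i, d i⟫)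
          = A + C + G + E := by
        rw [Finset.sum_add_distrib, Finset.sum_add_distrib, Finset.sum_add_distrib,
          ← hA, ← hC, ← hG, ← hE]
      linarith [hsum, this.le, this.ge]
    -- expansion of the distance term
    have hSexp : Sk (k+1) = Sk k + 2 * (M:ℝ)⁻¹ * E + ((M:ℝ)⁻¹)^2 * C := by
      have hterm : ∀ i : Fin M, L i * ‖(u (k+1) - ustar) i‖ ^ 2
          = L i * ‖(u k - ustar) i‖ ^ 2 + (2 * (M:ℝ)⁻¹) * (L i * ⟪e i, d i⟫)
            + ((M:ℝ)⁻¹)^2 * (L i * ‖d i‖ ^ 2) := by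
        intro i
        have e0 : (u (k+1) - ustar) i = e i + (M:ℝ)⁻¹ • d i := by
          rw [PiLp.sub_apply, hupd' k i]
          simp only [he, hd]
          abel
        have e1 : (u k - ustar) i = e i := by
          rw [PiLp.sub_apply]
        rw [e0, e1, norm_add_sq_real, real_inner_smul_right, norm_smul,
          Real.norm_eq_abs, mul_pow, sq_abs]
        ring
      simp only [hSk, norm1Sq]
      rw [Finset.sum_congr rfl (fun i _ => hterm i), Finset.sum_add_distrib,
        Finset.sum_add_distrib, ← Finset.mul_sum, ← Finset.mul_sum, ← hE, ← hC]
    -- strong convexity at (ustar, u k)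
    have hGlow : f (u k) - f ustar + σ₁ / 2 * Sk k ≤ G := by
      have h1 := hsc ustar (u k)
      have e1 : ⟪gradient f (u k), ustar - u k⟫ = -G := by
        rw [PiLp.inner_apply, hG, ← Finset.sum_neg_distrib]
        apply Finset.sum_congr rfl
        intro i _
        rw [PiLp.sub_apply, ← inner_neg_right]
        congr 1
        simp only [he]
        abel
      have e2 : norm1Sq L (ustar - u k) = Sk k := by
        simp only [hSk, norm1Sq]
        apply Finset.sum_congr rfl
        intro i _
        rw [PiLp.sub_apply, PiLp.sub_apply, norm_sub_rev]
      rw [← hg, e1, e2] at h1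
      linarith [h1]
    -- put the pieces together
    have hMinv1 : (M:ℝ)⁻¹ ≤ 1 := by
      rw [inv_le_one_iff₀]; right; exact hM1
    have hMinvpos : (0:ℝ) < (M:ℝ)⁻¹ := by positivity
    have hstep : Φ (k+1) ≤ Φ k - (M:ℝ)⁻¹ * (f (u k) - f ustar + σ₁ / 2 * Sk k) := by
      have t1 : ((M:ℝ)⁻¹)^2 * C ≤ (M:ℝ)⁻¹ * C := by
        have : ((M:ℝ)⁻¹)^2 ≤ (M:ℝ)⁻¹ := by nlinarith [hMinv1, hMinvpos]
        exact mul_le_mul_of_nonneg_right this hC0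
      have t2 : (M:ℝ)⁻¹ * (E + A + C) ≤ (M:ℝ)⁻¹ * (-G) :=
        mul_le_mul_of_nonneg_left (by linarith [hVI]) hMinvpos.le
      have t3 : (M:ℝ)⁻¹ * (-G) ≤ (M:ℝ)⁻¹ * (-(f (u k) - f ustar + σ₁ / 2 * Sk k)) :=
        mul_le_mul_of_nonneg_left (by linarith [hGlow]) hMinvpos.le
      have hΦ1 : Φ (k+1) = 1 / 2 * Sk (k+1) + f (u (k+1)) - f ustar := rfl
      have hΦ0 : Φ k = 1 / 2 * Sk k + f (u k) - f ustar := rfl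
      rw [hΦ1, hΦ0, hSexp]
      linarith [hJ, t1, t2, t3]
    -- contraction factor
    have hlam : (2 * σ₁ / (1 + σ₁)) * Φ k ≤ f (u k) - f ustar + σ₁ / 2 * Sk k := by
      have h1σ : (0:ℝ) < 1 + σ₁ := by linarith
      rw [div_mul_eq_mul_div, div_le_iff₀ h1σ]
      have hlow := lower k
      have hSnn : 0 ≤ Sk k := nn _
      have hφnn : 0 ≤ f (u k) - f ustar := by linarith [fstar_le k]
      have hprod : 0 ≤ (1 - σ₁) * ((f (u k) - f ustar) - σ₁ / 2 * Sk k) :=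
        mul_nonneg (by linarith) (by linarith)
      simp only [hΦ]
      nlinarith [hprod]
    have hfactor : (1 - 2 * σ₁ / ((M:ℝ) * (1 + σ₁))) * Φ k
        = Φ k - (M:ℝ)⁻¹ * ((2 * σ₁ / (1 + σ₁)) * Φ k) := by
      have h1σ : (1:ℝ) + σ₁ ≠ 0 := by positivity
      field_simp
    have := mul_le_mul_of_nonneg_left hlam hMinvpos.le
    rw [hfactor]
    linarith [hstep, this]
  -- iterate the contraction
  have hρnn : 0 ≤ 1 - 2 * σ₁ / ((M:ℝ) * (1 + σ₁)) := by
    have h1σ : (0:ℝ) < (M:ℝ) * (1 + σ₁) := by positivity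
    have h2 : 2 * σ₁ ≤ (M:ℝ) * (1 + σ₁) := by nlinarith [hM1, hσle, hσpos]
    have := div_le_one_of_le₀ h2 h1σ.le
    linarith
  have hiter : ∀ k, Φ k ≤ (1 - 2 * σ₁ / ((M:ℝ) * (1 + σ₁))) ^ k * Φ 0 := by
    intro k
    induction k with
    | zero => simp
    | succ k ih =>
      calc Φ (k+1) ≤ (1 - 2 * σ₁ / ((M:ℝ) * (1 + σ₁))) * Φ k := key k
        _ ≤ (1 - 2 * σ₁ / ((M:ℝ) * (1 + σ₁))) *
            ((1 - 2 * σ₁ / ((M:ℝ) * (1 + σ₁))) ^ k * Φ 0) :=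
          mul_le_mul_of_nonneg_left ih hρnn
        _ = (1 - 2 * σ₁ / ((M:ℝ) * (1 + σ₁))) ^ (k+1) * Φ 0 := by ring
  intro k
  have h1 : f (u k) - f ustar ≤ Φ k := by
    have := nn (u k - ustar)
    simp only [hΦ, hSk]
    linarith
  have h2 : Φ 0 = 1 / 2 * norm1Sq L (u 0 - ustar) + f (u 0) - f ustar := rfl
  calc f (u k) - f ustar ≤ Φ k := h1
    _ ≤ (1 - 2 * σ₁ / ((M:ℝ) * (1 + σ₁))) ^ k * Φ 0 := hiter k
    _ = (1 - 2 * σ₁ / ((M:ℝ) * (1 + σ₁))) ^ k *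
        (1 / 2 * norm1Sq L (u 0 - ustar) + f (u 0) - f ustar) := by rw [h2]
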